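/- Let φ : ℝ^m → ℝ^m be continuously differentiable with φ ∘ φ = id and φ(0) = 0, and set Q := Dφ(0). Define σ : ℝ^m → ℝ^m by σ(x) = x + Q(φ(x)). Then σ(φ(x)) = Q(σ(x)) for all x ∈ ℝ^m, and Dσ(0) = 2 · id; consequently σ restricts to a C¹-diffeomorphism between neighborhoods of 0, which conjugates φ to the linear involution Q near the origin. -/

import Mathlib

/-- Local linearization of a `C¹` involution `φ` of `ℝ^m` fixing the origin: with
`Q = Dφ(0)` and `σ x = x + Q (φ x)`, one has `σ ∘ φ = Q ∘ σ` and `Dσ(0) = 2·id`;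
consequently `σ` restricts to a `C¹`-diffeomorphism between neighborhoods of `0`
which conjugates `φ` to the linear involution `Q` near the origin. -/
theorem involution_locally_conjugate_to_linear
    (m : ℕ) (φ : EuclideanSpace ℝ (Fin m) → EuclideanSpace ℝ (Fin m))
    (hφ : ContDiff ℝ 1 φ) (hinv : φ ∘ φ = id) (h0 : φ 0 = 0)
    (Q : EuclideanSpace ℝ (Fin m) →L[ℝ] EuclideanSpace ℝ (Fin m)) (hQ : Q = fderiv ℝ φ 0)
    (σ : EuclideanSpace ℝ (Fin m) → EuclideanSpace ℝ (Fin m))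
    (hσ : ∀ x, σ x = x + Q (φ x)) :
    (∀ x, σ (φ x) = Q (σ x)) ∧
    fderiv ℝ σ 0 = (2 : ℝ) • ContinuousLinearMap.id ℝ (EuclideanSpace ℝ (Fin m)) ∧
    ∃ U V : Set (EuclideanSpace ℝ (Fin m)),
      IsOpen U ∧ IsOpen V ∧ (0 : EuclideanSpace ℝ (Fin m)) ∈ U ∧
      (0 : EuclideanSpace ℝ (Fin m)) ∈ V ∧
      Set.BijOn σ U V ∧ ContDiffOn ℝ 1 σ U ∧
      ContDiffOn ℝ 1 (Function.invFunOn σ U) V ∧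
      ∀ x ∈ U, σ (φ x) = Q (σ x) := by
  have hφφ : ∀ x, φ (φ x) = x := fun x => congrFun hinv x
  have hd : DifferentiableAt ℝ φ 0 := (hφ.differentiable one_ne_zero) 0
  have hQQ : ∀ x, Q (Q x) = x := by
    intro x
    have hcomp : fderiv ℝ (φ ∘ φ) 0 = (fderiv ℝ φ (φ 0)).comp (fderiv ℝ φ 0) :=
      fderiv_comp 0 (by rw [h0]; exact hd) hd
    rw [hinv, h0] at hcomp
    have h2 : ContinuousLinearMap.id ℝ _ = Q.comp Q := by
      rw [hQ]; simpa [fderiv_id] using hcomp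
    exact (congrArg (fun L => L x) h2.symm)
  have part1 : ∀ x, σ (φ x) = Q (σ x) := by
    intro x
    rw [hσ, hσ, hφφ, map_add, hQQ, add_comm]
  have hφ0 : HasFDerivAt φ Q 0 := hQ ▸ hd.hasFDerivAt
  have hσfun : σ = fun x => x + Q (φ x) := funext hσ
  have hσ0 : σ 0 = 0 := by rw [hσ, h0, map_zero, add_zero]
  have hσd : HasFDerivAt σ ((2 : ℝ) • ContinuousLinearMap.id ℝ (EuclideanSpace ℝ (Fin m))) 0 := by
    have h1 : HasFDerivAt (fun x => x + Q (φ x))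
        (ContinuousLinearMap.id ℝ (EuclideanSpace ℝ (Fin m)) + Q.comp Q) 0 :=
      (hasFDerivAt_id 0).add (Q.hasFDerivAt.comp 0 hφ0)
    have hE : Q.comp Q = ContinuousLinearMap.id ℝ (EuclideanSpace ℝ (Fin m)) :=
      ContinuousLinearMap.ext fun x => by simpa using hQQ x
    rw [hE, ← hσfun] at h1
    convert h1 using 1
    ext x i
    simp [two_smul, two_mul]
  have part2 : fderiv ℝ σ 0 = (2 : ℝ) • ContinuousLinearMap.id ℝ (EuclideanSpace ℝ (Fin m)) :=
    hσd.fderiv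
  refine ⟨part1, part2, ?_⟩
  have hσc : ContDiff ℝ 1 σ := by
    rw [hσfun]; exact contDiff_id.add (Q.contDiff.comp hφ)
  -- the derivative as a continuous linear equiv
  set e : EuclideanSpace ℝ (Fin m) ≃L[ℝ] EuclideanSpace ℝ (Fin m) :=
    (LinearEquiv.smulOfNeZero ℝ _ (2 : ℝ) two_ne_zero).toContinuousLinearEquiv with he
  have hecoe : (e : EuclideanSpace ℝ (Fin m) →L[ℝ] EuclideanSpace ℝ (Fin m)) =
      (2 : ℝ) • ContinuousLinearMap.id ℝ (EuclideanSpace ℝ (Fin m)) := by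
    ext x; rfl
  have hσd' : HasFDerivAt σ
      (e : EuclideanSpace ℝ (Fin m) →L[ℝ] EuclideanSpace ℝ (Fin m)) 0 := by
    rw [hecoe]; exact hσd
  have hca : ContDiffAt ℝ 1 σ 0 := hσc.contDiffAt
  set PH := hca.toOpenPartialHomeomorph σ hσd' one_ne_zero with hPH
  have hPHcoe : (PH : EuclideanSpace ℝ (Fin m) → EuclideanSpace ℝ (Fin m)) = σ := rfl
  have h0s : (0 : EuclideanSpace ℝ (Fin m)) ∈ PH.source :=
    hca.mem_toOpenPartialHomeomorph_source hσd' one_ne_zero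
  have h0t : (0 : EuclideanSpace ℝ (Fin m)) ∈ PH.target := by
    have := hca.image_mem_toOpenPartialHomeomorph_target hσd' one_ne_zero
    rwa [hσ0] at this
  -- local inverse smoothness
  have hg : ContDiffAt ℝ 1 (hca.localInverse hσd' one_ne_zero) 0 := by
    have := hca.to_localInverse hσd' one_ne_zero
    rwa [hσ0] at this
  obtain ⟨u, hu, hgu⟩ := hg.contDiffOn le_rfl (by simp)
  have hglocal : hca.localInverse hσd' one_ne_zero = PH.symm := rfl
  -- choose the sets
  set V : Set (EuclideanSpace ℝ (Fin m)) := PH.target ∩ interior u with hV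
  set U : Set (EuclideanSpace ℝ (Fin m)) := PH.source ∩ σ ⁻¹' V with hU
  have hVopen : IsOpen V := PH.open_target.inter isOpen_interior
  have hUopen : IsOpen U := PH.open_source.inter (hVopen.preimage hσc.continuous)
  have h0V : (0 : EuclideanSpace ℝ (Fin m)) ∈ V := ⟨h0t, mem_interior_iff_mem_nhds.2 hu⟩
  have h0U : (0 : EuclideanSpace ℝ (Fin m)) ∈ U := ⟨h0s, by simp [Set.mem_preimage, hσ0, h0V]⟩
  have hUsub : U ⊆ PH.source := Set.inter_subset_left
  have hmaps : Set.MapsTo σ U V := fun x hx => hx.2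
  have hinj : Set.InjOn σ U := PH.injOn.mono hUsub
  have hsurj : Set.SurjOn σ U V := by
    intro y hy
    refine ⟨PH.symm y, ⟨PH.map_target hy.1, ?_⟩, PH.right_inv hy.1⟩
    show σ (PH.symm y) ∈ V
    rw [show σ (PH.symm y) = y from PH.right_inv hy.1]
    exact hy
  have hbij : Set.BijOn σ U V := ⟨hmaps, hinj, hsurj⟩
  refine ⟨U, V, hUopen, hVopen, h0U, h0V, hbij, hσc.contDiffOn, ?_, fun x _ => part1 x⟩
  -- invFunOn agrees with PH.symm on V
  have hginv : ∀ y ∈ V, Function.invFunOn σ U y = PH.symm y := by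
    intro y hy
    obtain ⟨x, hxU, hxy⟩ := hsurj hy
    have h1 : Function.invFunOn σ U y ∈ U := Function.invFunOn_mem ⟨x, hxU, hxy⟩
    have h2 : σ (Function.invFunOn σ U y) = y := Function.invFunOn_eq ⟨x, hxU, hxy⟩
    have h3 : PH.symm y ∈ PH.source := PH.map_target hy.1
    have h4 : σ (PH.symm y) = y := PH.right_inv hy.1
    exact PH.injOn (hUsub h1) h3 (h2.trans h4.symm)
  have hVu : V ⊆ u := fun y hy => interior_subset hy.2
  refine ContDiffOn.congr ?_ hginv
  have : ContDiffOn ℝ 1 (PH.symm) u := by rwa [hglocal] at hgu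
  exact this.mono hVu
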